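/- Let G be a connected graph and T a subset of its vertices with |T| ≥ 2. Suppose that for every vertex x ∈ V(G) \ T, the graph G − x has at least two connected components each containing a vertex of T. Then the number of vertices of G of degree at least 3 is at most 3(|T| − 2). -/

import Mathlib

open SimpleGraph Finset

universe u

section Helpers

variable {V : Type*}

/-- Reachability within a vertex set `s` (entire walk support inside `s`). -/
def RIn (G : SimpleGraph V) (s : Set V) (a b : V) : Prop :=
  ∃ p : G.Walk a b, ∀ z ∈ p.support, z ∈ s

namespace RIn

variable {G : SimpleGraph V} {s s' : Set V} {a b c : V}

lemma mem_left (h : RIn G s a b) : a ∈ s := by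
  obtain ⟨p, hp⟩ := h
  exact hp a p.start_mem_support

lemma mem_right (h : RIn G s a b) : b ∈ s := by
  obtain ⟨p, hp⟩ := h
  exact hp b p.end_mem_support

lemma refl (ha : a ∈ s) : RIn G s a a :=
  ⟨SimpleGraph.Walk.nil, by simp [ha]⟩

lemma symm (h : RIn G s a b) : RIn G s b a := by
  obtain ⟨p, hp⟩ := h
  exact ⟨p.reverse, by simpa using hp⟩

lemma trans (h : RIn G s a b) (h' : RIn G s b c) : RIn G s a c := by
  obtain ⟨p, hp⟩ := h
  obtain ⟨q, hq⟩ := h'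
  refine ⟨p.append q, fun z hz => ?_⟩
  rw [SimpleGraph.Walk.support_append, List.mem_append] at hz
  rcases hz with hz | hz
  · exact hp z hz
  · exact hq z (List.mem_of_mem_tail hz)

lemma mono (hss : s ⊆ s') (h : RIn G s a b) : RIn G s' a b := by
  obtain ⟨p, hp⟩ := h
  exact ⟨p, fun z hz => hss (hp z hz)⟩

lemma concat (h : RIn G s a b) (hadj : G.Adj b c) (hc : c ∈ s) : RIn G s a c :=
  h.trans ⟨hadj.toWalk, by
    intro z hz
    rcases List.mem_pair.mp (by simpa using hz) with rfl | rfl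
    · exact h.mem_right
    · exact hc⟩

end RIn

/-- Lift a walk whose support sits inside `s` to the induced graph. -/
lemma exists_induce_walk {G : SimpleGraph V} {s : Set V} :
    ∀ {a b : V} (p : G.Walk a b) (hp : ∀ z ∈ p.support, z ∈ s),
      ∃ q : (G.induce s).Walk ⟨a, hp a p.start_mem_support⟩ ⟨b, hp b p.end_mem_support⟩,
        ∀ z ∈ q.support, (z : V) ∈ p.support := by
  intro a b p
  induction p with
  | nil =>
    intro hp
    exact ⟨SimpleGraph.Walk.nil, by simp⟩
  | @cons u v w h p ih =>
    intro hp
    have hv : ∀ z ∈ p.support, z ∈ s := fun z hz => hp z (by simp [hz])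
    obtain ⟨q, hq⟩ := ih hv
    have hadj : (G.induce s).Adj ⟨u, hp u (by simp)⟩ ⟨v, hv v p.start_mem_support⟩ := h
    refine ⟨SimpleGraph.Walk.cons hadj q, ?_⟩
    intro z hz
    rw [SimpleGraph.Walk.support_cons] at hz
    rcases List.mem_cons.mp hz with rfl | hz
    · simp
    · simp [hq z hz]

lemma induce_reachable_iff {G : SimpleGraph V} {s : Set V} (a b : ↥s) :
    (G.induce s).Reachable a b ↔ RIn G s a b := by
  constructor
  · rintro ⟨p⟩
    refine ⟨p.map (SimpleGraph.Embedding.induce s).toHom, fun z hz => ?_⟩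
    erw [SimpleGraph.Walk.support_map, List.mem_map] at hz
    obtain ⟨w, -, rfl⟩ := hz
    exact w.2
  · rintro ⟨p, hp⟩
    obtain ⟨q, -⟩ := exists_induce_walk p hp
    exact ⟨by convert q⟩

lemma induce_induce_reachable_iff {G : SimpleGraph V} {s : Set V} (y : ↥s)
    (a b : ↥({v : ↥s | v ≠ y} : Set ↥s)) :
    (SimpleGraph.induce {v : ↥s | v ≠ y} (G.induce s)).Reachable a b ↔
      RIn G (s \ {(y : V)}) (a : V) (b : V) := by
  rw [induce_reachable_iff]
  constructor
  · rintro ⟨p, hp⟩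
    refine ⟨p.map (SimpleGraph.Embedding.induce s).toHom, fun z hz => ?_⟩
    erw [SimpleGraph.Walk.support_map, List.mem_map] at hz
    obtain ⟨w, hw, rfl⟩ := hz
    exact ⟨w.2, fun hzy => (hp w hw) (Subtype.ext hzy)⟩
  · rintro ⟨p, hp⟩
    have hps : ∀ z ∈ p.support, z ∈ s := fun z hz => (hp z hz).1
    obtain ⟨q, hq⟩ := exists_induce_walk p hps
    refine ⟨q.copy (Subtype.ext rfl) (Subtype.ext rfl), fun z hz => ?_⟩
    rw [SimpleGraph.Walk.support_copy] at hz
    have h2 := hp _ (hq z hz)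
    intro hzy
    exact h2.2 (by rw [hzy]; exact Set.mem_singleton _)

lemma reach_aux {G : SimpleGraph V} {x : V} {S : Set V} (hxS : x ∈ S)
    (hcl : ∀ v w, v ∈ S → v ≠ x → G.Adj v w → w ≠ x → w ∈ S) :
    ∀ {v b : V} (p : G.Walk v b), b = x → v ∈ S → RIn G S v x := by
  intro v b p
  induction p with
  | nil => rintro rfl hv; exact ⟨SimpleGraph.Walk.nil, by simpa using hv⟩
  | @cons u w xx h p ih =>
    rintro rfl hu
    by_cases hux : u = xx
    · subst hux; exact ⟨SimpleGraph.Walk.nil, by simpa using hxS⟩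
    by_cases hwx : w = xx
    · subst hwx
      exact ⟨h.toWalk, by
        intro z hz
        rcases List.mem_pair.mp (by simpa using hz) with rfl | rfl
        exacts [hu, hxS]⟩
    · have hw : w ∈ S := hcl u w hu hux h hwx
      obtain ⟨q, hq⟩ := ih rfl hw
      exact ⟨SimpleGraph.Walk.cons h q, by
        intro z hz
        rcases List.mem_cons.mp (by simpa using hz) with rfl | hz
        exacts [hu, hq z hz]⟩

lemma card_filter_val [Fintype V] (s : Set V) [Fintype ↥s] [DecidablePred (· ∈ s)]
    (P : V → Prop) [DecidablePred P] :
    (Finset.univ.filter fun v : ↥s => P ↑v).card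
      = (Finset.univ.filter fun v : V => v ∈ s ∧ P v).card := by
  refine Finset.card_bij' (fun v _ => (v : V)) (fun v hv => ⟨v, (Finset.mem_filter.mp hv).2.1⟩)
    ?_ ?_ ?_ ?_
  · intro a ha
    simp only [Finset.mem_filter, Finset.mem_univ, true_and] at ha ⊢
    exact ⟨a.2, ha⟩
  · intro a ha
    simp only [Finset.mem_filter, Finset.mem_univ, true_and] at ha ⊢
    exact ha.2
  · intro a _; rfl
  · intro a _; rfl

lemma degree_induce [Fintype V] [DecidableEq V] (G : SimpleGraph V) [DecidableRel G.Adj]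
    (s : Set V) [Fintype ↥s] [DecidableRel (G.induce s).Adj] [DecidablePred (· ∈ s)] (v : ↥s) :
    (G.induce s).degree v = (Finset.univ.filter fun w : V => w ∈ s ∧ G.Adj ↑v w).card := by
  classical
  rw [← card_neighborFinset_eq_degree, neighborFinset_eq_filter]
  rw [show (Finset.univ.filter fun w => (G.induce s).Adj v w).card
      = (Finset.univ.filter fun w : ↥s => G.Adj (↑v : V) ↑w).card from by
    congr 1
    apply Finset.filter_congr
    intro w _
    exact Eq.to_iff rfl]
  exact card_filter_val s _

lemma card_add_ite_le [DecidableEq V] {A B : Finset V} {x : V} (hxA : x ∉ A)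
    {c : Prop} [Decidable c] (hsub : A ⊆ B) (hxB : c → x ∈ B) :
    A.card + (if c then 1 else 0) ≤ B.card := by
  split_ifs with h
  · have hins : insert x A ⊆ B := Finset.insert_subset (hxB h) hsub
    calc A.card + 1 = (insert x A).card := (Finset.card_insert_of_notMem hxA).symm
      _ ≤ B.card := Finset.card_le_card hins
  · simpa using Finset.card_le_card hsub

lemma card_le_add_ite [DecidableEq V] {A B : Finset V} {x : V}
    {c : Prop} [Decidable c] (hsub : A ⊆ insert x B) (hxA : ¬ c → x ∉ A) :
    A.card ≤ B.card + (if c then 1 else 0) := by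
  split_ifs with h
  · calc A.card ≤ (insert x B).card := Finset.card_le_card hsub
      _ ≤ B.card + 1 := Finset.card_insert_le _ _
  · have : A ⊆ B := fun a ha => by
      rcases Finset.mem_insert.mp (hsub ha) with rfl | hB
      · exact absurd ha (hxA h)
      · exact hB
    simpa using Finset.card_le_card this

end Helpers

theorem key (n : ℕ) : ∀ (V : Type u) [Fintype V] [DecidableEq V] (G : SimpleGraph V)
    [DecidableRel G.Adj] (T : Finset V), Fintype.card V ≤ n → G.Connected → 2 ≤ T.card →
    (∀ x : V, x ∉ T →
      ∃ t₁ t₂ : ({v : V | v ≠ x} : Set V), (t₁ : V) ∈ T ∧ (t₂ : V) ∈ T ∧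
        ¬ (SimpleGraph.induce {v : V | v ≠ x} G).Reachable t₁ t₂) →
    (Finset.univ.filter fun v => 3 ≤ G.degree v).card
      + (T.filter fun v => G.degree v = 2).card ≤ 3 * (T.card - 2) := by
  induction n with
  | zero =>
    intro V _ _ G _ T hn _ hT _
    exfalso
    have h1 : T.card ≤ Fintype.card V := by
      simpa using T.card_le_univ
    omega
  | succ n ih =>
    intro V _ _ G _ T hn hconn hT hcrit
    classical
    by_cases hex : ∃ x, x ∉ T
    · obtain ⟨x, hx⟩ := hex
      obtain ⟨t₁', t₂', ht₁T, ht₂T, hnr⟩ := hcrit x hx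
      rw [induce_reachable_iff] at hnr
      set C : Set V := {v : V | RIn G {u : V | u ≠ x} (↑t₁') v} with hCdef
      have hmemC : ∀ v : V, v ∈ C ↔ RIn G {u : V | u ≠ x} (↑t₁') v := fun v => Iff.rfl
      have hCne : ∀ v ∈ C, v ≠ x := fun v hv => ((hmemC v).mp hv).mem_right
      have hCx : x ∉ C := fun h => hCne x h rfl
      have ht₁C : (↑t₁' : V) ∈ C := (hmemC _).mpr (RIn.refl t₁'.2)
      have ht₂C : (↑t₂' : V) ∉ C := fun h => hnr ((hmemC _).mp h)
      have hCcl : ∀ v ∈ C, ∀ w, G.Adj v w → w ≠ x → w ∈ C := fun v hv w ha hw =>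
        (hmemC w).mpr (((hmemC v).mp hv).concat ha hw)
      have hCcl' : ∀ v, v ∉ C → v ≠ x → ∀ w, G.Adj v w → w ≠ x → w ∉ C := by
        intro v hv hvx w ha hwx hwC
        exact hv (hCcl w hwC v ha.symm hvx)
      set S₁ : Set V := insert x C with hS₁def
      set S₂ : Set V := Cᶜ with hS₂def
      have hxS₁ : x ∈ S₁ := Set.mem_insert _ _
      have hxS₂ : x ∈ S₂ := hCx
      have hCS₁ : C ⊆ S₁ := Set.subset_insert _ _
      have hS₁mem : ∀ v : V, v ∈ S₁ ↔ v = x ∨ v ∈ C := fun v => Set.mem_insert_iff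
      have hS₂mem : ∀ v : V, v ∈ S₂ ↔ v ∉ C := fun v => Iff.rfl
      have hcl₁ : ∀ v w, v ∈ S₁ → v ≠ x → G.Adj v w → w ≠ x → w ∈ S₁ := by
        intro v w hv hvx ha hwx
        rcases (hS₁mem v).mp hv with rfl | hvC
        · exact absurd rfl hvx
        · exact hCS₁ (hCcl v hvC w ha hwx)
      have hcl₂ : ∀ v w, v ∈ S₂ → v ≠ x → G.Adj v w → w ≠ x → w ∈ S₂ := by
        intro v w hv hvx ha hwx
        exact hCcl' v hv hvx w ha hwx
      have hreach₁ : ∀ v ∈ S₁, RIn G S₁ v x := by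
        intro v hv
        obtain ⟨p⟩ := hconn.preconnected v x
        exact reach_aux hxS₁ hcl₁ p rfl hv
      have hreach₂ : ∀ v ∈ S₂, RIn G S₂ v x := by
        intro v hv
        obtain ⟨p⟩ := hconn.preconnected v x
        exact reach_aux hxS₂ hcl₂ p rfl hv
      -- crossing lemmas : any vertex reaches `x` avoiding any vertex on the other side
      have hcross₁ : ∀ v ∈ C, ∀ y : V, y ∉ S₁ → RIn G {u : V | u ≠ y} v x := by
        intro v hv y hy
        exact (hreach₁ v (hCS₁ hv)).mono (fun z hz hzy => hy (hzy ▸ hz))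
      have hcross₂ : ∀ v, v ∉ C → v ≠ x → ∀ y ∈ C, RIn G {u : V | u ≠ y} v x := by
        intro v hv hvx y hy
        exact (hreach₂ v hv).mono (fun z hz hzy => (hz : z ∉ C) (hzy ▸ hy))
      -- instances for the two pieces
      haveI : DecidablePred (· ∈ S₁) := Classical.decPred _
      haveI : DecidablePred (· ∈ S₂) := Classical.decPred _
      haveI : Fintype ↥S₁ := Fintype.ofFinite _
      haveI : Fintype ↥S₂ := Fintype.ofFinite _
      haveI : DecidableRel (G.induce S₁).Adj := Classical.decRel _
      haveI : DecidableRel (G.induce S₂).Adj := Classical.decRel _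
      -- cardinalities of the pieces
      have hcard₁ : Fintype.card ↥S₁ < Fintype.card V := by
        rw [← Set.toFinset_card, ← Finset.card_univ]
        apply Finset.card_lt_card
        rw [Finset.ssubset_univ_iff]
        intro h
        have : (↑t₂' : V) ∈ S₁ := Set.mem_toFinset.mp (h ▸ Finset.mem_univ _)
        rcases (hS₁mem _).mp this with h' | h'
        · exact t₂'.2 h'
        · exact ht₂C h'
      have hcard₂ : Fintype.card ↥S₂ < Fintype.card V := by
        rw [← Set.toFinset_card, ← Finset.card_univ]
        apply Finset.card_lt_card
        rw [Finset.ssubset_univ_iff]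
        intro h
        have : (↑t₁' : V) ∈ S₂ := Set.mem_toFinset.mp (h ▸ Finset.mem_univ _)
        exact this ht₁C
      -- connectivity of the two pieces
      have hconn₁ : (G.induce S₁).Connected := by
        rw [connected_iff]
        refine ⟨fun a b => ?_, ⟨⟨x, hxS₁⟩⟩⟩
        exact ((induce_reachable_iff a ⟨x, hxS₁⟩).mpr (hreach₁ ↑a a.2)).trans
          ((induce_reachable_iff b ⟨x, hxS₁⟩).mpr (hreach₁ ↑b b.2)).symm
      have hconn₂ : (G.induce S₂).Connected := by
        rw [connected_iff]
        refine ⟨fun a b => ?_, ⟨⟨x, hxS₂⟩⟩⟩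
        exact ((induce_reachable_iff a ⟨x, hxS₂⟩).mpr (hreach₂ ↑a a.2)).trans
          ((induce_reachable_iff b ⟨x, hxS₂⟩).mpr (hreach₂ ↑b b.2)).symm
      -- terminal sets of the two pieces
      set T₁ : Finset ↥S₁ :=
        Finset.univ.filter (fun v : ↥S₁ => (v : V) ∈ T ∨ (v : V) = x) with hT₁def
      set T₂ : Finset ↥S₂ :=
        Finset.univ.filter (fun v : ↥S₂ => (v : V) ∈ T ∨ (v : V) = x) with hT₂def
      have hmemT₁ : ∀ v : ↥S₁, v ∈ T₁ ↔ ((v : V) ∈ T ∨ (v : V) = x) := by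
        intro v
        rw [hT₁def, Finset.mem_filter]
        simp
      have hmemT₂ : ∀ v : ↥S₂, v ∈ T₂ ↔ ((v : V) ∈ T ∨ (v : V) = x) := by
        intro v
        rw [hT₂def, Finset.mem_filter]
        simp
      have hT₁card : 2 ≤ T₁.card := by
        have hsub : ({⟨↑t₁', hCS₁ ht₁C⟩, ⟨x, hxS₁⟩} : Finset ↥S₁) ⊆ T₁ := by
          intro z hz
          rcases Finset.mem_insert.mp hz with rfl | hz
          · exact (hmemT₁ _).mpr (Or.inl ht₁T)
          · rw [Finset.mem_singleton.mp hz]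
            exact (hmemT₁ _).mpr (Or.inr rfl)
        have hne : (⟨↑t₁', hCS₁ ht₁C⟩ : ↥S₁) ≠ ⟨x, hxS₁⟩ :=
          fun h => hCne _ ht₁C (congrArg Subtype.val h)
        calc 2 = ({⟨↑t₁', hCS₁ ht₁C⟩, ⟨x, hxS₁⟩} : Finset ↥S₁).card :=
              (Finset.card_pair hne).symm
          _ ≤ T₁.card := Finset.card_le_card hsub
      have hT₂card : 2 ≤ T₂.card := by
        have hsub : ({⟨↑t₂', ht₂C⟩, ⟨x, hxS₂⟩} : Finset ↥S₂) ⊆ T₂ := by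
          intro z hz
          rcases Finset.mem_insert.mp hz with rfl | hz
          · exact (hmemT₂ _).mpr (Or.inl ht₂T)
          · rw [Finset.mem_singleton.mp hz]
            exact (hmemT₂ _).mpr (Or.inr rfl)
        have hne : (⟨↑t₂', ht₂C⟩ : ↥S₂) ≠ ⟨x, hxS₂⟩ :=
          fun h => t₂'.2 (congrArg Subtype.val h)
        calc 2 = ({⟨↑t₂', ht₂C⟩, ⟨x, hxS₂⟩} : Finset ↥S₂).card :=
              (Finset.card_pair hne).symm
          _ ≤ T₂.card := Finset.card_le_card hsub
      -- transfer of the separation hypothesis to piece 1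
      have hcrit₁ : ∀ y : ↥S₁, y ∉ T₁ →
          ∃ u₁ u₂ : ({v : ↥S₁ | v ≠ y} : Set ↥S₁), (u₁ : ↥S₁) ∈ T₁ ∧ (u₂ : ↥S₁) ∈ T₁ ∧
            ¬ (SimpleGraph.induce {v : ↥S₁ | v ≠ y} (G.induce S₁)).Reachable u₁ u₂ := by
        intro y hy
        have hyT : (↑y : V) ∉ T := fun h => hy ((hmemT₁ y).mpr (Or.inl h))
        have hyx : (↑y : V) ≠ x := fun h => hy ((hmemT₁ y).mpr (Or.inr h))
        have hyC : (↑y : V) ∈ C := by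
          rcases (hS₁mem _).mp y.2 with h | h
          · exact absurd h hyx
          · exact h
        obtain ⟨w₁, w₂, hw₁T, hw₂T, hw⟩ := hcrit ↑y hyT
        rw [induce_reachable_iff] at hw
        have hax : (↑w₁ : V) ≠ x := fun h => hx (h ▸ hw₁T)
        have hbx : (↑w₂ : V) ≠ x := fun h => hx (h ▸ hw₂T)
        have hxney : x ≠ (↑y : V) := fun h => hyx h.symm
        by_cases haC : (↑w₁ : V) ∈ C <;> by_cases hbC : (↑w₂ : V) ∈ C
        · refine ⟨⟨⟨↑w₁, hCS₁ haC⟩, fun h => w₁.2 (congrArg Subtype.val h)⟩,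
            ⟨⟨↑w₂, hCS₁ hbC⟩, fun h => w₂.2 (congrArg Subtype.val h)⟩,
            (hmemT₁ _).mpr (Or.inl hw₁T), (hmemT₁ _).mpr (Or.inl hw₂T), ?_⟩
          rw [induce_induce_reachable_iff]
          intro hR
          exact hw (hR.mono (fun z hz => hz.2))
        · refine ⟨⟨⟨↑w₁, hCS₁ haC⟩, fun h => w₁.2 (congrArg Subtype.val h)⟩,
            ⟨⟨x, hxS₁⟩, fun h => hxney (congrArg Subtype.val h)⟩,
            (hmemT₁ _).mpr (Or.inl hw₁T), (hmemT₁ _).mpr (Or.inr rfl), ?_⟩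
          rw [induce_induce_reachable_iff]
          intro hR
          exact hw ((hR.mono (fun z hz => hz.2)).trans
            (hcross₂ ↑w₂ hbC hbx ↑y hyC).symm)
        · refine ⟨⟨⟨x, hxS₁⟩, fun h => hxney (congrArg Subtype.val h)⟩,
            ⟨⟨↑w₂, hCS₁ hbC⟩, fun h => w₂.2 (congrArg Subtype.val h)⟩,
            (hmemT₁ _).mpr (Or.inr rfl), (hmemT₁ _).mpr (Or.inl hw₂T), ?_⟩
          rw [induce_induce_reachable_iff]
          intro hR
          exact hw ((hcross₂ ↑w₁ haC hax ↑y hyC).trans (hR.mono (fun z hz => hz.2)))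
        · exact (hw ((hcross₂ ↑w₁ haC hax ↑y hyC).trans
            (hcross₂ ↑w₂ hbC hbx ↑y hyC).symm)).elim
      -- transfer of the separation hypothesis to piece 2
      have hcrit₂ : ∀ y : ↥S₂, y ∉ T₂ →
          ∃ u₁ u₂ : ({v : ↥S₂ | v ≠ y} : Set ↥S₂), (u₁ : ↥S₂) ∈ T₂ ∧ (u₂ : ↥S₂) ∈ T₂ ∧
            ¬ (SimpleGraph.induce {v : ↥S₂ | v ≠ y} (G.induce S₂)).Reachable u₁ u₂ := by
        intro y hy
        have hyT : (↑y : V) ∉ T := fun h => hy ((hmemT₂ y).mpr (Or.inl h))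
        have hyx : (↑y : V) ≠ x := fun h => hy ((hmemT₂ y).mpr (Or.inr h))
        have hyC : (↑y : V) ∉ C := y.2
        have hyS₁ : (↑y : V) ∉ S₁ := by
          intro h
          rcases (hS₁mem _).mp h with h' | h'
          · exact hyx h'
          · exact hyC h'
        obtain ⟨w₁, w₂, hw₁T, hw₂T, hw⟩ := hcrit ↑y hyT
        rw [induce_reachable_iff] at hw
        have hax : (↑w₁ : V) ≠ x := fun h => hx (h ▸ hw₁T)
        have hbx : (↑w₂ : V) ≠ x := fun h => hx (h ▸ hw₂T)
        have hxney : x ≠ (↑y : V) := fun h => hyx h.symm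
        by_cases haC : (↑w₁ : V) ∈ C <;> by_cases hbC : (↑w₂ : V) ∈ C
        · exact (hw ((hcross₁ ↑w₁ haC ↑y hyS₁).trans
            (hcross₁ ↑w₂ hbC ↑y hyS₁).symm)).elim
        · refine ⟨⟨⟨x, hxS₂⟩, fun h => hxney (congrArg Subtype.val h)⟩,
            ⟨⟨↑w₂, hbC⟩, fun h => w₂.2 (congrArg Subtype.val h)⟩,
            (hmemT₂ _).mpr (Or.inr rfl), (hmemT₂ _).mpr (Or.inl hw₂T), ?_⟩
          rw [induce_induce_reachable_iff]
          intro hR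
          exact hw ((hcross₁ ↑w₁ haC ↑y hyS₁).trans (hR.mono (fun z hz => hz.2)))
        · refine ⟨⟨⟨↑w₁, haC⟩, fun h => w₁.2 (congrArg Subtype.val h)⟩,
            ⟨⟨x, hxS₂⟩, fun h => hxney (congrArg Subtype.val h)⟩,
            (hmemT₂ _).mpr (Or.inl hw₁T), (hmemT₂ _).mpr (Or.inr rfl), ?_⟩
          rw [induce_induce_reachable_iff]
          intro hR
          exact hw ((hR.mono (fun z hz => hz.2)).trans
            (hcross₁ ↑w₂ hbC ↑y hyS₁).symm)
        · refine ⟨⟨⟨↑w₁, haC⟩, fun h => w₁.2 (congrArg Subtype.val h)⟩,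
            ⟨⟨↑w₂, hbC⟩, fun h => w₂.2 (congrArg Subtype.val h)⟩,
            (hmemT₂ _).mpr (Or.inl hw₁T), (hmemT₂ _).mpr (Or.inl hw₂T), ?_⟩
          rw [induce_induce_reachable_iff]
          intro hR
          exact hw (hR.mono (fun z hz => hz.2))
      -- apply the induction hypothesis to both pieces
      have hIH₁ := ih ↥S₁ (G.induce S₁) T₁ (by omega) hconn₁ hT₁card hcrit₁
      have hIH₂ := ih ↥S₂ (G.induce S₂) T₂ (by omega) hconn₂ hT₂card hcrit₂
      -- neighbours stay on their side
      have hnbr₁ : ∀ v ∈ C, ∀ w, G.Adj v w → w ∈ S₁ := by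
        intro v hv w ha
        by_cases hwx : w = x
        · rw [hwx]; exact hxS₁
        · exact hCS₁ (hCcl v hv w ha hwx)
      have hnbr₂ : ∀ v, v ∉ C → v ≠ x → ∀ w, G.Adj v w → w ∈ S₂ := by
        intro v hv hvx w ha
        by_cases hwx : w = x
        · rw [hwx]; exact hxS₂
        · exact hCcl' v hv hvx w ha hwx
      -- degrees are preserved away from x
      have hdeg₁ : ∀ v : ↥S₁, (↑v : V) ≠ x → (G.induce S₁).degree v = G.degree ↑v := by
        intro v hvx
        have hvC : (↑v : V) ∈ C := ((hS₁mem _).mp v.2).resolve_left hvx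
        rw [degree_induce, ← card_neighborFinset_eq_degree, neighborFinset_eq_filter]
        exact congrArg Finset.card
          (Finset.filter_congr fun w _ => ⟨And.right, fun h => ⟨hnbr₁ _ hvC w h, h⟩⟩)
      have hdeg₂ : ∀ v : ↥S₂, (↑v : V) ≠ x → (G.induce S₂).degree v = G.degree ↑v := by
        intro v hvx
        have hvC : (↑v : V) ∉ C := v.2
        rw [degree_induce, ← card_neighborFinset_eq_degree, neighborFinset_eq_filter]
        exact congrArg Finset.card
          (Finset.filter_congr fun w _ => ⟨And.right, fun h => ⟨hnbr₂ _ hvC hvx w h, h⟩⟩)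
      -- degree of x splits between the two pieces
      set d₁ : ℕ := (G.induce S₁).degree ⟨x, hxS₁⟩ with hd₁def
      set d₂ : ℕ := (G.induce S₂).degree ⟨x, hxS₂⟩ with hd₂def
      have hxd₁ : d₁ = ((Finset.univ.filter (G.Adj x)).filter (fun w => w ∈ C)).card := by
        rw [hd₁def, degree_induce]
        congr 1
        rw [Finset.filter_filter]
        refine Finset.filter_congr fun w _ => ?_
        constructor
        · rintro ⟨hS, hA⟩
          rcases (hS₁mem w).mp hS with rfl | hC'
          · exact (G.loopless.irrefl _ hA).elim
          · exact ⟨hA, hC'⟩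
        · rintro ⟨hA, hC'⟩
          exact ⟨hCS₁ hC', hA⟩
      have hxd₂ : d₂ = ((Finset.univ.filter (G.Adj x)).filter (fun w => ¬ w ∈ C)).card := by
        rw [hd₂def, degree_induce]
        congr 1
        rw [Finset.filter_filter]
        exact Finset.filter_congr fun w _ => ⟨fun h => ⟨h.2, h.1⟩, fun h => ⟨h.2, h.1⟩⟩
      have hd : d₁ + d₂ = G.degree x := by
        rw [hxd₁, hxd₂, Finset.card_filter_add_card_filter_not,
          ← neighborFinset_eq_filter, card_neighborFinset_eq_degree]
      -- V-side counting sets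
      set DC : Finset V := Finset.univ.filter (fun v => v ∈ C ∧ 3 ≤ G.degree v) with hDCdef
      set Dc : Finset V :=
        Finset.univ.filter (fun v => ¬ v ∈ C ∧ v ≠ x ∧ 3 ≤ G.degree v) with hDcdef
      set sC : Finset V :=
        Finset.univ.filter (fun v => v ∈ C ∧ v ∈ T ∧ G.degree v = 2) with hsCdef
      set sc : Finset V :=
        Finset.univ.filter (fun v => ¬ v ∈ C ∧ v ∈ T ∧ G.degree v = 2) with hscdef
      set a₁ : ℕ := (T.filter (fun v => v ∈ C)).card with ha₁def
      set a₂ : ℕ := (T.filter (fun v => ¬ v ∈ C)).card with ha₂def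
      have ha₁ : 1 ≤ a₁ := by
        rw [ha₁def]
        exact Finset.card_pos.mpr ⟨↑t₁', Finset.mem_filter.mpr ⟨ht₁T, ht₁C⟩⟩
      have ha₂ : 1 ≤ a₂ := by
        rw [ha₂def]
        exact Finset.card_pos.mpr ⟨↑t₂', Finset.mem_filter.mpr ⟨ht₂T, ht₂C⟩⟩
      have hasum : a₁ + a₂ = T.card := by
        rw [ha₁def, ha₂def]
        exact Finset.card_filter_add_card_filter_not _
      -- splitting of the global counts
      have hD : (Finset.univ.filter fun v => 3 ≤ G.degree v).card
          ≤ DC.card + Dc.card + (if 3 ≤ G.degree x then 1 else 0) := by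
        have h1 := Finset.card_filter_add_card_filter_not
          (s := Finset.univ.filter fun v => 3 ≤ G.degree v) (p := fun v => v ∈ C)
        have e1 : (Finset.univ.filter fun v : V => 3 ≤ G.degree v).filter (fun v => v ∈ C)
            = DC := by
          rw [hDCdef, Finset.filter_filter]
          exact Finset.filter_congr fun w _ => ⟨fun h => ⟨h.2, h.1⟩, fun h => ⟨h.2, h.1⟩⟩
        have e2 : ((Finset.univ.filter fun v : V => 3 ≤ G.degree v).filter
            (fun v => ¬ v ∈ C)).card ≤ Dc.card + (if 3 ≤ G.degree x then 1 else 0) := by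
          refine card_le_add_ite (x := x) ?_ ?_
          · intro v hv
            obtain ⟨hv1, hv2⟩ := Finset.mem_filter.mp hv
            obtain ⟨-, hv3⟩ := Finset.mem_filter.mp hv1
            by_cases hvx : v = x
            · rw [hvx]; exact Finset.mem_insert_self _ _
            · exact Finset.mem_insert_of_mem
                (Finset.mem_filter.mpr ⟨Finset.mem_univ _, hv2, hvx, hv3⟩)
          · intro hc hmem
            obtain ⟨hv1, -⟩ := Finset.mem_filter.mp hmem
            exact hc (Finset.mem_filter.mp hv1).2
        rw [e1] at h1
        omega
      have hs : (T.filter fun v => G.degree v = 2).card = sC.card + sc.card := by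
        have h1 := Finset.card_filter_add_card_filter_not
          (s := T.filter fun v => G.degree v = 2) (p := fun v => v ∈ C)
        have e1 : (T.filter fun v : V => G.degree v = 2).filter (fun v => v ∈ C) = sC := by
          rw [hsCdef, Finset.filter_filter]
          ext v
          simp only [Finset.mem_filter, Finset.mem_univ, true_and]
          tauto
        have e2 : (T.filter fun v : V => G.degree v = 2).filter (fun v => ¬ v ∈ C) = sc := by
          rw [hscdef, Finset.filter_filter]
          ext v
          simp only [Finset.mem_filter, Finset.mem_univ, true_and]
          tauto
        rw [e1, e2] at h1
        omega
      -- piece 1 : count of high-degree vertices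
      have hpd₁ : DC.card + (if 3 ≤ d₁ then 1 else 0)
          ≤ (Finset.univ.filter fun v : ↥S₁ => 3 ≤ (G.induce S₁).degree v).card := by
        have hfe : (Finset.univ.filter fun v : ↥S₁ => 3 ≤ (G.induce S₁).degree v)
            = (Finset.univ.filter
                fun v : ↥S₁ => 3 ≤ (if (↑v : V) = x then d₁ else G.degree ↑v)) := by
          refine Finset.filter_congr fun v _ => ?_
          by_cases h : (↑v : V) = x
          · have hv : v = ⟨x, hxS₁⟩ := Subtype.ext h
            rw [hv, if_pos rfl]
          · rw [if_neg h, hdeg₁ v h]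
        rw [hfe, card_filter_val S₁ (fun u => 3 ≤ (if u = x then d₁ else G.degree u))]
        refine card_add_ite_le (x := x) ?_ ?_ ?_
        · intro h
          exact hCx (Finset.mem_filter.mp h).2.1
        · intro v hv
          obtain ⟨-, hvC, hvd⟩ := Finset.mem_filter.mp hv
          refine Finset.mem_filter.mpr ⟨Finset.mem_univ _, hCS₁ hvC, ?_⟩
          rw [if_neg (hCne v hvC)]
          exact hvd
        · intro h
          exact Finset.mem_filter.mpr ⟨Finset.mem_univ _, hxS₁, by rw [if_pos rfl]; exact h⟩
      -- piece 1 : count of degree-2 terminals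
      have hps₁ : sC.card + (if d₁ = 2 then 1 else 0)
          ≤ (T₁.filter fun v : ↥S₁ => (G.induce S₁).degree v = 2).card := by
        have hfe : (T₁.filter fun v : ↥S₁ => (G.induce S₁).degree v = 2)
            = (Finset.univ.filter fun v : ↥S₁ => ((↑v : V) ∈ T ∨ (↑v : V) = x)
                ∧ (if (↑v : V) = x then d₁ else G.degree ↑v) = 2) := by
          rw [hT₁def, Finset.filter_filter]
          refine Finset.filter_congr fun v _ => ?_
          by_cases h : (↑v : V) = x
          · have hv : v = ⟨x, hxS₁⟩ := Subtype.ext h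
            rw [hv, if_pos rfl]
          · rw [if_neg h, hdeg₁ v h]
        rw [hfe, card_filter_val S₁
          (fun u => (u ∈ T ∨ u = x) ∧ (if u = x then d₁ else G.degree u) = 2)]
        refine card_add_ite_le (x := x) ?_ ?_ ?_
        · intro h
          exact hCx (Finset.mem_filter.mp h).2.1
        · intro v hv
          obtain ⟨-, hvC, hvT, hvd⟩ := Finset.mem_filter.mp hv
          refine Finset.mem_filter.mpr ⟨Finset.mem_univ _, hCS₁ hvC, Or.inl hvT, ?_⟩
          rw [if_neg (hCne v hvC)]
          exact hvd
        · intro h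
          exact Finset.mem_filter.mpr
            ⟨Finset.mem_univ _, hxS₁, Or.inr rfl, by rw [if_pos rfl]; exact h⟩
      -- piece 2 : count of high-degree vertices
      have hpd₂ : Dc.card + (if 3 ≤ d₂ then 1 else 0)
          ≤ (Finset.univ.filter fun v : ↥S₂ => 3 ≤ (G.induce S₂).degree v).card := by
        have hfe : (Finset.univ.filter fun v : ↥S₂ => 3 ≤ (G.induce S₂).degree v)
            = (Finset.univ.filter
                fun v : ↥S₂ => 3 ≤ (if (↑v : V) = x then d₂ else G.degree ↑v)) := by
          refine Finset.filter_congr fun v _ => ?_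
          by_cases h : (↑v : V) = x
          · have hv : v = ⟨x, hxS₂⟩ := Subtype.ext h
            rw [hv, if_pos rfl]
          · rw [if_neg h, hdeg₂ v h]
        rw [hfe, card_filter_val S₂ (fun u => 3 ≤ (if u = x then d₂ else G.degree u))]
        refine card_add_ite_le (x := x) ?_ ?_ ?_
        · intro h
          exact (Finset.mem_filter.mp h).2.2.1 rfl
        · intro v hv
          obtain ⟨-, hvC, hvx, hvd⟩ := Finset.mem_filter.mp hv
          refine Finset.mem_filter.mpr ⟨Finset.mem_univ _, hvC, ?_⟩
          rw [if_neg hvx]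
          exact hvd
        · intro h
          exact Finset.mem_filter.mpr ⟨Finset.mem_univ _, hxS₂, by rw [if_pos rfl]; exact h⟩
      -- piece 2 : count of degree-2 terminals
      have hps₂ : sc.card + (if d₂ = 2 then 1 else 0)
          ≤ (T₂.filter fun v : ↥S₂ => (G.induce S₂).degree v = 2).card := by
        have hfe : (T₂.filter fun v : ↥S₂ => (G.induce S₂).degree v = 2)
            = (Finset.univ.filter fun v : ↥S₂ => ((↑v : V) ∈ T ∨ (↑v : V) = x)
                ∧ (if (↑v : V) = x then d₂ else G.degree ↑v) = 2) := by
          rw [hT₂def, Finset.filter_filter]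
          refine Finset.filter_congr fun v _ => ?_
          by_cases h : (↑v : V) = x
          · have hv : v = ⟨x, hxS₂⟩ := Subtype.ext h
            rw [hv, if_pos rfl]
          · rw [if_neg h, hdeg₂ v h]
        rw [hfe, card_filter_val S₂
          (fun u => (u ∈ T ∨ u = x) ∧ (if u = x then d₂ else G.degree u) = 2)]
        refine card_add_ite_le (x := x) ?_ ?_ ?_
        · intro h
          exact hx (Finset.mem_filter.mp h).2.2.1
        · intro v hv
          obtain ⟨-, hvC, hvT, hvd⟩ := Finset.mem_filter.mp hv
          have hvx : v ≠ x := fun h => hx (h ▸ hvT)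
          refine Finset.mem_filter.mpr ⟨Finset.mem_univ _, hvC, Or.inl hvT, ?_⟩
          rw [if_neg hvx]
          exact hvd
        · intro h
          exact Finset.mem_filter.mpr
            ⟨Finset.mem_univ _, hxS₂, Or.inr rfl, by rw [if_pos rfl]; exact h⟩
      -- cardinalities of the terminal sets of the pieces
      have hT₁c : T₁.card = a₁ + 1 := by
        rw [hT₁def, card_filter_val S₁ (fun u => u ∈ T ∨ u = x)]
        have he : (Finset.univ.filter fun u : V => u ∈ S₁ ∧ (u ∈ T ∨ u = x))
            = insert x (T.filter (fun v => v ∈ C)) := by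
          ext u
          simp only [Finset.mem_filter, Finset.mem_univ, true_and, Finset.mem_insert]
          constructor
          · rintro ⟨hS, hT' | rfl⟩
            · rcases (hS₁mem u).mp hS with rfl | hC'
              · exact Or.inl rfl
              · exact Or.inr ⟨hT', hC'⟩
            · exact Or.inl rfl
          · rintro (rfl | ⟨hT', hC'⟩)
            · exact ⟨hxS₁, Or.inr rfl⟩
            · exact ⟨hCS₁ hC', Or.inl hT'⟩
        rw [he, Finset.card_insert_of_notMem (fun h => hx (Finset.mem_filter.mp h).1),
          ha₁def]
      have hT₂c : T₂.card = a₂ + 1 := by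
        rw [hT₂def, card_filter_val S₂ (fun u => u ∈ T ∨ u = x)]
        have he : (Finset.univ.filter fun u : V => u ∈ S₂ ∧ (u ∈ T ∨ u = x))
            = insert x (T.filter (fun v => ¬ v ∈ C)) := by
          ext u
          simp only [Finset.mem_filter, Finset.mem_univ, true_and, Finset.mem_insert]
          constructor
          · rintro ⟨hS, hT' | rfl⟩
            · exact Or.inr ⟨hT', hS⟩
            · exact Or.inl rfl
          · rintro (rfl | ⟨hT', hC'⟩)
            · exact ⟨hxS₂, Or.inr rfl⟩
            · exact ⟨hC', Or.inl hT'⟩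
        rw [he, Finset.card_insert_of_notMem (fun h => hx (Finset.mem_filter.mp h).1),
          ha₂def]
      -- put everything together
      rw [hT₁c] at hIH₁
      rw [hT₂c] at hIH₂
      have h1 : DC.card + (if 3 ≤ d₁ then 1 else 0) + (sC.card + (if d₁ = 2 then 1 else 0))
          ≤ 3 * (a₁ + 1 - 2) := le_trans (Nat.add_le_add hpd₁ hps₁) hIH₁
      have h2 : Dc.card + (if 3 ≤ d₂ then 1 else 0) + (sc.card + (if d₂ = 2 then 1 else 0))
          ≤ 3 * (a₂ + 1 - 2) := le_trans (Nat.add_le_add hpd₂ hps₂) hIH₂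
      split_ifs at hD h1 h2 <;> omega
    · -- base case : every vertex is a terminal
      push_neg at hex
      have hTuniv : T = Finset.univ := Finset.eq_univ_iff_forall.mpr hex
      have hcV : Fintype.card V = T.card := by rw [hTuniv]; simp
      by_cases h3 : 3 ≤ T.card
      · have hdisj : Disjoint (Finset.univ.filter fun v => 3 ≤ G.degree v)
            (T.filter fun v => G.degree v = 2) := by
          rw [Finset.disjoint_left]
          intro a ha ha'
          have h1 := (Finset.mem_filter.mp ha).2
          have h2 := (Finset.mem_filter.mp ha').2
          omega
        have := Finset.card_union_of_disjoint hdisj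
        have hle : ((Finset.univ.filter fun v => 3 ≤ G.degree v)
            ∪ (T.filter fun v => G.degree v = 2)).card ≤ Fintype.card V := by
          rw [← Finset.card_univ]
          exact Finset.card_le_card (Finset.union_subset (Finset.filter_subset _ _)
            ((Finset.filter_subset _ _).trans (by rw [hTuniv])))
        omega
      · have hT2 : T.card = 2 := by omega
        have hdeg : ∀ v : V, G.degree v < 2 := by
          intro v
          have := G.degree_lt_card_verts v
          omega
        have e1 : (Finset.univ.filter fun v => 3 ≤ G.degree v) = ∅ := by
          apply Finset.filter_eq_empty_iff.mpr
          intro v _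
          have := hdeg v
          omega
        have e2 : (T.filter fun v => G.degree v = 2) = ∅ := by
          apply Finset.filter_eq_empty_iff.mpr
          intro v _
          have := hdeg v
          omega
        rw [e1, e2]
        simp

/-- If `G` is a finite simple connected graph and `T ⊆ V(G)` with `|T| ≥ 2`
such that for every `x ∉ T`, deleting `x` leaves at least two connected components each
containing a vertex of `T`, then the number of vertices of degree at least 3 is at most
`3(|T| − 2)`. -/
theorem stmt0 {V : Type*} [Fintype V] [DecidableEq V]
    (G : SimpleGraph V) [DecidableRel G.Adj] (T : Finset V)
    (hconn : G.Connected) (hT : 2 ≤ T.card)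
    (hcrit : ∀ x : V, x ∉ T →
      ∃ t₁ t₂ : ({v : V | v ≠ x} : Set V), (t₁ : V) ∈ T ∧ (t₂ : V) ∈ T ∧
        ¬ (SimpleGraph.induce {v : V | v ≠ x} G).Reachable t₁ t₂) :
    (Finset.univ.filter fun v => 3 ≤ G.degree v).card ≤ 3 * (T.card - 2) := by
  have h := key (Fintype.card V) V G T le_rfl hconn hT hcrit
  omega
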